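/- Let t ≥ 1 be a natural number, C := 4·log 2 − 2, and let B > 0 satisfy B·e ≤ 1/2 and B·e ≤ 1/(C·t). Let a_1, …, a_t be real numbers such that for every k ∈ {1, …, t}: a_k ≥ 1 and a_k ≤ −log(1 − X_{k−1})/X_{k−1}, where X_{k−1} := B·∏_{i=1}^{k−1} a_i. Then X_{k−1} ≤ 1/2 for all k ∈ {1, …, t}, each a_k ≤ 1 + 1/t, and ∏_{k=1}^{t} a_k ≤ e. -/

import Mathlib

open Finset

lemma neg_log_le_key {x : ℝ} (hx0 : 0 < x) (hx : x ≤ 1/2) :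
    -Real.log (1 - x) ≤ x + (4 * Real.log 2 - 2) * x ^ 2 := by
  have hx1 : |x| < 1 := by rw [abs_of_pos hx0]; linarith
  have h1 := Real.hasSum_pow_div_log_of_abs_lt_one hx1
  have h2 := Real.hasSum_pow_div_log_of_abs_lt_one (x := (1/2:ℝ)) (by rw [abs_of_pos] <;> norm_num)
  have h2' : HasSum (fun n : ℕ => (1/2:ℝ) ^ (n+1) / ((n:ℝ)+1)) (Real.log 2) := by
    convert h2 using 1
    rw [show (1:ℝ) - 1/2 = 2⁻¹ by norm_num, Real.log_inv, neg_neg]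
  have h1s : HasSum (fun n : ℕ => x ^ (n+2) / ((n:ℝ)+2)) (-Real.log (1-x) - x) := by
    have h := (hasSum_nat_add_iff' (f := fun n : ℕ => x ^ (n+1)/((n:ℝ)+1)) 1).2 h1
    simp only [range_one, sum_singleton, pow_one] at h
    norm_num at h
    convert h using 2 with n
    · rfl
    push_cast; ring
  have h2s : HasSum (fun n : ℕ => (1/2:ℝ) ^ (n+2) / ((n:ℝ)+2)) (Real.log 2 - 1/2) := by
    have h := (hasSum_nat_add_iff' (f := fun n : ℕ => (1/2:ℝ) ^ (n+1)/((n:ℝ)+1)) 1).2 h2'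
    simp only [range_one, sum_singleton, pow_one] at h
    norm_num at h
    convert h using 2 with n
    · rfl
    push_cast; ring
  have h2m : HasSum (fun n : ℕ => 4*x^2 * ((1/2:ℝ) ^ (n+2) / ((n:ℝ)+2)))
      (4*x^2 * (Real.log 2 - 1/2)) := h2s.mul_left _
  have hle : -Real.log (1-x) - x ≤ 4*x^2 * (Real.log 2 - 1/2) := by
    refine hasSum_le (fun n => ?_) h1s h2m
    have heq : 4*x^2 * ((1/2:ℝ) ^ (n+2) / ((n:ℝ)+2)) = x^2 * (1/2:ℝ)^n / ((n:ℝ)+2) := by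
      ring
    rw [heq]
    gcongr
    calc x^(n+2) = x^2 * x^n := by ring
      _ ≤ x^2 * (1/2:ℝ)^n :=
          mul_le_mul_of_nonneg_left (pow_le_pow_left₀ hx0.le hx n) (sq_nonneg x)
  nlinarith [hle]

/-- **Inductive recursion for the constant prefactor of the variance** (paper's
Proposition): with `C = 4·log 2 − 2`, `B > 0`, `B·e ≤ 1/2`, `B·e ≤ 1/(C·t)`, and
per-step prefactors `a_k ≥ 1` satisfying `a_k ≤ −log(1 − X_{k−1})/X_{k−1}` where
`X_m = B·∏_{i=1}^m a_i`, one has `X_{k−1} ≤ 1/2` for all `k ∈ {1, …, t}`, each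
`a_k ≤ 1 + 1/t`, and `∏_{k=1}^t a_k ≤ e`. -/
theorem constant_prefactor_variance
    (t : ℕ) (ht : 1 ≤ t) (B : ℝ) (hB : 0 < B)
    (hBe1 : B * Real.exp 1 ≤ 1 / 2)
    (hBe2 : B * Real.exp 1 ≤ 1 / ((4 * Real.log 2 - 2) * t))
    (a : ℕ → ℝ) (X : ℕ → ℝ)
    (hX : ∀ m, X m = B * ∏ i ∈ Icc 1 m, a i)
    (ha1 : ∀ k, 1 ≤ k → k ≤ t → 1 ≤ a k)
    (ha2 : ∀ k, 1 ≤ k → k ≤ t → a k ≤ -Real.log (1 - X (k - 1)) / X (k - 1)) :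
    (∀ k, 1 ≤ k → k ≤ t → X (k - 1) ≤ 1 / 2) ∧
      (∀ k, 1 ≤ k → k ≤ t → a k ≤ 1 + 1 / t) ∧
      ∏ k ∈ Icc 1 t, a k ≤ Real.exp 1 := by
  have htR : (0:ℝ) < t := by exact_mod_cast Nat.lt_of_lt_of_le Nat.zero_lt_one ht
  have hC : (0:ℝ) < 4 * Real.log 2 - 2 := by
    nlinarith [Real.log_two_gt_d9]
  -- (1+1/t)^m ≤ e for m ≤ t
  have hpow : ∀ m : ℕ, m ≤ t → (1 + 1/(t:ℝ)) ^ m ≤ Real.exp 1 := by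
    intro m hm
    have h1 : (1:ℝ) ≤ 1 + 1/(t:ℝ) := by
      have : (0:ℝ) < 1/(t:ℝ) := by positivity
      linarith
    calc (1 + 1/(t:ℝ)) ^ m ≤ (1 + 1/(t:ℝ)) ^ t := pow_le_pow_right₀ h1 hm
      _ ≤ (Real.exp (1/(t:ℝ))) ^ t := by
          apply pow_le_pow_left₀ (by positivity)
          linarith [Real.add_one_le_exp (1/(t:ℝ))]
      _ = Real.exp ((t:ℝ) * (1/(t:ℝ))) := (Real.exp_nat_mul _ t).symm
      _ = Real.exp 1 := by rw [mul_one_div, div_self htR.ne']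
  -- products bounds
  have hprodge : ∀ m, m ≤ t → (1:ℝ) ≤ ∏ i ∈ Icc 1 m, a i := by
    intro m hm
    calc (1:ℝ) = ∏ _i ∈ Icc 1 m, (1:ℝ) := (prod_const_one).symm
      _ ≤ ∏ i ∈ Icc 1 m, a i := by
          apply prod_le_prod (fun i _ => zero_le_one)
          intro i hi
          rw [mem_Icc] at hi
          exact ha1 i hi.1 (hi.2.trans hm)
  have hprodle : ∀ m, m ≤ t → (∀ i, 1 ≤ i → i ≤ m → a i ≤ 1 + 1/(t:ℝ)) →
      ∏ i ∈ Icc 1 m, a i ≤ Real.exp 1 := by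
    intro m hm hbd
    calc ∏ i ∈ Icc 1 m, a i ≤ ∏ _i ∈ Icc 1 m, (1 + 1/(t:ℝ)) := by
          apply prod_le_prod
          · intro i hi
            rw [mem_Icc] at hi
            linarith [ha1 i hi.1 (hi.2.trans hm)]
          · intro i hi
            rw [mem_Icc] at hi
            exact hbd i hi.1 hi.2
      _ = (1 + 1/(t:ℝ)) ^ m := by rw [prod_const, Nat.card_Icc]; norm_num
      _ ≤ Real.exp 1 := hpow m hm
  -- main induction
  have hkey : ∀ k, k ≤ t → ∀ i, 1 ≤ i → i ≤ k → a i ≤ 1 + 1/(t:ℝ) := by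
    intro k
    induction k with
    | zero => intro _ i h1 h2; omega
    | succ k ih =>
      intro hk i h1 h2
      rcases Nat.lt_or_ge i (k+1) with h | h
      · exact ih (by omega) i h1 (by omega)
      have hik : i = k + 1 := le_antisymm h2 h
      subst hik
      have hk' : k ≤ t := by omega
      have hPle := hprodle k hk' (ih hk')
      have hPge := hprodge k hk'
      have hX0 : 0 < X k := by
        rw [hX k]; exact mul_pos hB (lt_of_lt_of_le one_pos hPge)
      have hXle : X k ≤ B * Real.exp 1 := by
        rw [hX k]; exact mul_le_mul_of_nonneg_left hPle hB.le
      have hXhalf : X k ≤ 1/2 := hXle.trans hBe1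
      have hlog := neg_log_le_key hX0 hXhalf
      have ha := ha2 (k+1) (by omega) hk
      rw [Nat.add_sub_cancel] at ha
      have hstep : a (k+1) ≤ 1 + (4*Real.log 2 - 2) * X k := by
        refine ha.trans ?_
        rw [div_le_iff₀ hX0]
        nlinarith [hlog]
      have hCt : (4*Real.log 2 - 2) * (B * Real.exp 1) ≤ 1/(t:ℝ) := by
        calc (4*Real.log 2 - 2) * (B * Real.exp 1)
            ≤ (4*Real.log 2 - 2) * (1 / ((4 * Real.log 2 - 2) * t)) :=
              mul_le_mul_of_nonneg_left hBe2 hC.le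
          _ = 1/(t:ℝ) := by field_simp
      have hCX : (4*Real.log 2 - 2) * X k ≤ (4*Real.log 2 - 2) * (B * Real.exp 1) :=
        mul_le_mul_of_nonneg_left hXle hC.le
      linarith
  refine ⟨?_, fun k hk1 hk2 => hkey t le_rfl k hk1 hk2, hprodle t le_rfl (hkey t le_rfl)⟩
  intro k hk1 hk2
  have hm : k - 1 ≤ t := by omega
  have hPle := hprodle (k-1) hm (fun i hi1 hi2 => hkey t le_rfl i hi1 (hi2.trans hm))
  calc X (k-1) ≤ B * Real.exp 1 := by
        rw [hX (k-1)]; exact mul_le_mul_of_nonneg_left hPle hB.le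
    _ ≤ 1/2 := hBe1
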